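/- If D is a ∗-Prüfer domain, then (FG)⁻¹ = (F⁻¹G⁻¹)^∗ for all nonzero finitely generated fractional ideals F, G of D. -/

import Mathlib

open FractionalIdeal

/-- A star operation on an integral domain `D` with fraction field `K`, acting on
fractional ideals: it fixes `D`, is extensive, monotone, idempotent (all on nonzero
ideals), and commutes with multiplication by nonzero principal fractional ideals. -/
structure StarOp (D : Type*) [CommRing D] [IsDomain D] (K : Type*) [Field K]
    [Algebra D K] [IsFractionRing D K] where
  star : FractionalIdeal (nonZeroDivisors D) K → FractionalIdeal (nonZeroDivisors D) K
  star_one : star 1 = 1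
  le_star : ∀ {A}, A ≠ 0 → A ≤ star A
  star_mono : ∀ {A B}, A ≠ 0 → A ≤ B → star A ≤ star B
  star_idem : ∀ {A}, A ≠ 0 → star (star A) = star A
  star_smul : ∀ {A : FractionalIdeal (nonZeroDivisors D) K} (x : K), x ≠ 0 → A ≠ 0 →
    star (spanSingleton (nonZeroDivisors D) x * A) = spanSingleton (nonZeroDivisors D) x * star A

variable {D K : Type*} [CommRing D] [IsDomain D] [Field K] [Algebra D K] [IsFractionRing D K]

private theorem StarOpAux.exists_ne_zero {A : FractionalIdeal (nonZeroDivisors D) K}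
    (hA : A ≠ 0) : ∃ x ∈ A, x ≠ (0 : K) := by
  by_contra h
  push_neg at h
  exact hA (eq_zero_iff.mpr h)

private theorem StarOpAux.mul_ne_zero' {A B : FractionalIdeal (nonZeroDivisors D) K}
    (hA : A ≠ 0) (hB : B ≠ 0) : A * B ≠ 0 := by
  obtain ⟨a, haA, ha⟩ := StarOpAux.exists_ne_zero hA
  obtain ⟨b, hbB, hb⟩ := StarOpAux.exists_ne_zero hB
  intro h
  have : a * b = 0 := eq_zero_iff.mp h _ (mul_mem_mul haA hbB)
  exact (mul_ne_zero ha hb) this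

private theorem StarOpAux.mul_le_mul'' {A B C E : FractionalIdeal (nonZeroDivisors D) K}
    (h1 : A ≤ B) (h2 : C ≤ E) : A * C ≤ B * E :=
  le_trans (mul_le_mul_right h2 A) (by
    rw [mul_comm A E, mul_comm B E]; exact mul_le_mul_right h1 E)

private theorem StarOpAux.le_inv_iff {I J : FractionalIdeal (nonZeroDivisors D) K}
    (hJ : J ≠ 0) : I ≤ J⁻¹ ↔ I * J ≤ 1 := by
  rw [inv_eq, le_div_iff_mul_le hJ]

private theorem StarOpAux.mul_inv_le_one (I : FractionalIdeal (nonZeroDivisors D) K) :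
    I * I⁻¹ ≤ 1 := by
  rw [inv_eq]; exact mul_one_div_le_one

private theorem StarOpAux.star_ne_zero (s : StarOp D K)
    {A : FractionalIdeal (nonZeroDivisors D) K}
    (hA : A ≠ 0) : s.star A ≠ 0 := fun h => hA (le_antisymm (h ▸ s.le_star hA) (zero_le _))

/-- `(A * B^*)^* = (A * B)^*`. -/
private theorem StarOpAux.star_mul_star (s : StarOp D K)
    {A B : FractionalIdeal (nonZeroDivisors D) K}
    (hA : A ≠ 0) (hB : B ≠ 0) : s.star (A * s.star B) = s.star (A * B) := by
  have hAB : A * B ≠ 0 := StarOpAux.mul_ne_zero' hA hB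
  have hABs : A * s.star B ≠ 0 := StarOpAux.mul_ne_zero' hA (StarOpAux.star_ne_zero s hB)
  apply le_antisymm
  · have hle : A * s.star B ≤ s.star (A * B) := by
      rw [mul_le]
      intro a ha b hb
      rcases eq_or_ne a 0 with rfl | ha0
      · rw [zero_mul]; exact zero_mem _
      have h1 : spanSingleton (nonZeroDivisors D) a * B ≤ A * B := by
        rw [mul_le]
        intro i hi j hj
        rcases (mem_spanSingleton _).mp hi with ⟨z, rfl⟩
        rw [smul_mul_assoc]
        exact Submodule.smul_mem _ _ (mul_mem_mul ha hj)
      have h2 : spanSingleton (nonZeroDivisors D) a * s.star B ≤ s.star (A * B) := by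
        rw [← s.star_smul a ha0 hB]
        exact s.star_mono
          (StarOpAux.mul_ne_zero' (spanSingleton_ne_zero_iff.mpr ha0) hB) h1
      exact h2 (mul_mem_mul (mem_spanSingleton_self _ a) hb)
    calc s.star (A * s.star B) ≤ s.star (s.star (A * B)) := s.star_mono hABs hle
      _ = s.star (A * B) := s.star_idem hAB
  · exact s.star_mono hAB (mul_le_mul_right (s.le_star hB) A)

private theorem StarOpAux.inv_ne_zero {I : FractionalIdeal (nonZeroDivisors D) K}
    (hI : I ≠ 0) : I⁻¹ ≠ 0 := by
  have hd : (algebraMap D K) I.den ≠ 0 := by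
    simpa using nonZeroDivisors.coe_ne_zero I.den
  have hle : spanSingleton (nonZeroDivisors D) ((algebraMap D K) I.den) ≤ I⁻¹ := by
    rw [StarOpAux.le_inv_iff hI, den_mul_self_eq_num']
    exact coeIdeal_le_one
  intro h
  rw [h, FractionalIdeal.le_zero_iff] at hle
  exact spanSingleton_ne_zero_iff.mpr hd hle

/-- In a `∗`-Prüfer domain, `(FG)⁻¹ = (F⁻¹G⁻¹)^∗` for all nonzero finitely
generated fractional ideals `F`, `G`. -/
theorem starPrufer_inv_mul_fg (s : StarOp D K)
    (hP : ∀ F : FractionalIdeal (nonZeroDivisors D) K, F ≠ 0 → (F : Submodule D K).FG → s.star (F * F⁻¹) = 1) :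
    ∀ F G : FractionalIdeal (nonZeroDivisors D) K, F ≠ 0 → (F : Submodule D K).FG → G ≠ 0 → (G : Submodule D K).FG →
      (F * G)⁻¹ = s.star (F⁻¹ * G⁻¹) := by
  intro F G hF hFfg hG hGfg
  have hFi : F⁻¹ ≠ 0 := StarOpAux.inv_ne_zero hF
  have hGi : G⁻¹ ≠ 0 := StarOpAux.inv_ne_zero hG
  have hFG : F * G ≠ 0 := StarOpAux.mul_ne_zero' hF hG
  have hH : (F * G)⁻¹ ≠ 0 := StarOpAux.inv_ne_zero hFG
  have hFiGi : F⁻¹ * G⁻¹ ≠ 0 := StarOpAux.mul_ne_zero' hFi hGi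
  -- F⁻¹ * G⁻¹ ≤ (F * G)⁻¹
  have hsub : F⁻¹ * G⁻¹ ≤ (F * G)⁻¹ := by
    rw [StarOpAux.le_inv_iff hFG]
    have heq : F⁻¹ * G⁻¹ * (F * G) = (F * F⁻¹) * (G * G⁻¹) := by ring
    rw [heq]
    calc (F * F⁻¹) * (G * G⁻¹) ≤ 1 * 1 :=
          StarOpAux.mul_le_mul'' (StarOpAux.mul_inv_le_one F) (StarOpAux.mul_inv_le_one G)
      _ = 1 := one_mul 1
  apply le_antisymm
  · -- (F * G)⁻¹ ≤ star (F⁻¹ * G⁻¹)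
    have step1 : s.star ((F * G)⁻¹) = s.star ((F * G)⁻¹ * (F * F⁻¹)) := by
      conv_lhs => rw [← mul_one ((F * G)⁻¹)]
      rw [← hP F hF hFfg,
        StarOpAux.star_mul_star s hH (StarOpAux.mul_ne_zero' hF hFi)]
    have hHF : (F * G)⁻¹ * F ≤ G⁻¹ := by
      rw [StarOpAux.le_inv_iff hG]
      have heq : (F * G)⁻¹ * F * G = (F * G) * (F * G)⁻¹ := by ring
      rw [heq]
      exact StarOpAux.mul_inv_le_one (F * G)
    have step2 : (F * G)⁻¹ * (F * F⁻¹) ≤ F⁻¹ * G⁻¹ := by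
      have heq : (F * G)⁻¹ * (F * F⁻¹) = ((F * G)⁻¹ * F) * F⁻¹ := by ring
      rw [heq, mul_comm (F⁻¹) (G⁻¹)]
      exact StarOpAux.mul_le_mul'' hHF le_rfl
    calc (F * G)⁻¹ ≤ s.star ((F * G)⁻¹) := s.le_star hH
      _ = s.star ((F * G)⁻¹ * (F * F⁻¹)) := step1
      _ ≤ s.star (F⁻¹ * G⁻¹) :=
          s.star_mono (StarOpAux.mul_ne_zero' hH (StarOpAux.mul_ne_zero' hF hFi)) step2
  · -- star (F⁻¹ * G⁻¹) ≤ (F * G)⁻¹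
    rw [StarOpAux.le_inv_iff hFG, mul_le]
    intro x hx y hy
    rcases eq_or_ne y 0 with rfl | hy0
    · rw [mul_zero]; exact zero_mem _
    have h1 : spanSingleton (nonZeroDivisors D) y * (F⁻¹ * G⁻¹) ≤ 1 := by
      calc spanSingleton (nonZeroDivisors D) y * (F⁻¹ * G⁻¹)
          ≤ (F * G) * (F * G)⁻¹ :=
            StarOpAux.mul_le_mul'' (spanSingleton_le_iff_mem.mpr hy) hsub
        _ ≤ 1 := StarOpAux.mul_inv_le_one (F * G)
    have h2 : spanSingleton (nonZeroDivisors D) y * s.star (F⁻¹ * G⁻¹) ≤ 1 := by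
      rw [← s.star_smul y hy0 hFiGi]
      calc s.star (spanSingleton (nonZeroDivisors D) y * (F⁻¹ * G⁻¹))
          ≤ s.star 1 := s.star_mono
            (StarOpAux.mul_ne_zero' (spanSingleton_ne_zero_iff.mpr hy0) hFiGi) h1
        _ = 1 := s.star_one
    have hxy : x * y ∈ spanSingleton (nonZeroDivisors D) y * s.star (F⁻¹ * G⁻¹) := by
      rw [mul_comm x y]
      exact mul_mem_mul (mem_spanSingleton_self _ y) hx
    exact h2 hxy
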